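/- For the unit square [0,1]² with reference point x₀ = (1/2, 1/2), normal n(φ) = (cos φ, sin φ), and prescribed area fraction α* > 1/2, the signed distance s*(φ) solving the area constraint is given piecewise by s*(φ) = (α* − 1/2)cos φ for φ ∈ [0, φ′] and s*(φ) = (sin φ + cos φ)/2 − √(2(1−α*) cos φ sin φ) for φ ∈ (φ′, π/4], where tan φ′ = 2(1−α*); moreover s*(·) is continuously differentiable at φ = φ′. -/

import Mathlib

open MeasureTheory Real intervalIntegral


lemma vol_eq (c s t : ℝ) (hc : 0 < c) :
    (volume {x : ℝ × ℝ | x ∈ Set.Icc ((0 : ℝ), (0 : ℝ)) (1, 1) ∧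
        (x.1 - 1 / 2) * c + (x.2 - 1 / 2) * s ≤ t}).toReal
      = ∫ y in (0:ℝ)..1, max 0 (min 1 ((t + (c + s) / 2 - s * y) / c)) := by
  have hSm : MeasurableSet {x : ℝ × ℝ | x ∈ Set.Icc ((0 : ℝ), (0 : ℝ)) (1, 1) ∧
      (x.1 - 1 / 2) * c + (x.2 - 1 / 2) * s ≤ t} := by
    apply MeasurableSet.inter
    · exact measurableSet_Icc
    · exact measurableSet_le
        (((measurable_fst.sub measurable_const).mul measurable_const).add
          ((measurable_snd.sub measurable_const).mul measurable_const)) measurable_const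
  rw [Measure.volume_eq_prod, Measure.prod_apply_symm hSm]
  have hsec : ∀ y : ℝ, ((fun x => (x, y)) ⁻¹' {x : ℝ × ℝ | x ∈ Set.Icc ((0 : ℝ), (0 : ℝ)) (1, 1) ∧
      (x.1 - 1 / 2) * c + (x.2 - 1 / 2) * s ≤ t})
      = if y ∈ Set.Icc (0:ℝ) 1 then Set.Icc 0 (min 1 ((t + (c + s) / 2 - s * y) / c)) else ∅ := by
    intro y
    by_cases hy : y ∈ Set.Icc (0:ℝ) 1
    · rw [if_pos hy]
      obtain ⟨hy0, hy1⟩ := hy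
      ext x
      simp only [Set.mem_preimage, Set.mem_setOf_eq, Set.mem_Icc, Prod.le_def, le_min_iff]
      constructor
      · rintro ⟨⟨⟨h1, h2⟩, h3, h4⟩, h5⟩
        refine ⟨h1, h3, ?_⟩
        rw [le_div_iff₀ hc]
        nlinarith
      · rintro ⟨h1, h2, h3⟩
        rw [le_div_iff₀ hc] at h3
        exact ⟨⟨⟨h1, hy0⟩, h2, hy1⟩, by nlinarith⟩
    · rw [if_neg hy]
      ext x
      simp only [Set.mem_preimage, Set.mem_setOf_eq, Set.mem_Icc, Prod.le_def,
        Set.mem_empty_iff_false, iff_false]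
      rintro ⟨⟨⟨h1, h2⟩, h3, h4⟩, h5⟩
      exact hy ⟨h2, h4⟩
  have hstep : (∫⁻ y, volume ((fun x => (x, y)) ⁻¹'
      {x : ℝ × ℝ | x ∈ Set.Icc ((0 : ℝ), (0 : ℝ)) (1, 1) ∧
        (x.1 - 1 / 2) * c + (x.2 - 1 / 2) * s ≤ t}))
      = ∫⁻ y, (Set.Icc (0:ℝ) 1).indicator
          (fun y => ENNReal.ofReal (max 0 (min 1 ((t + (c + s) / 2 - s * y) / c)))) y := by
    apply lintegral_congr
    intro y
    rw [hsec y]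
    by_cases hy : y ∈ Set.Icc (0:ℝ) 1
    · rw [if_pos hy, Set.indicator_of_mem hy, Real.volume_Icc]
      rcases le_or_gt 0 (min 1 ((t + (c + s) / 2 - s * y) / c)) with h | h
      · rw [max_eq_right h]; congr 1; ring
      · rw [max_eq_left h.le, ENNReal.ofReal_eq_zero.2 (by linarith), ENNReal.ofReal_eq_zero.2 le_rfl]
    · rw [if_neg hy, Set.indicator_of_notMem hy, measure_empty]
  rw [hstep, lintegral_indicator measurableSet_Icc]
  have hcont : Continuous fun y : ℝ => max 0 (min 1 ((t + (c + s) / 2 - s * y) / c)) :=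
    continuous_const.max (continuous_const.min (by fun_prop))
  have h2 : ∫⁻ y in Set.Icc (0:ℝ) 1,
      ENNReal.ofReal (max 0 (min 1 ((t + (c + s) / 2 - s * y) / c)))
      = ENNReal.ofReal (∫ y in Set.Icc (0:ℝ) 1, max 0 (min 1 ((t + (c + s) / 2 - s * y) / c))) :=
    (ofReal_integral_eq_lintegral_ofReal hcont.integrableOn_Icc
      (Filter.Eventually.of_forall fun y => le_max_left _ _)).symm
  have h3 : (0:ℝ) ≤ ∫ y in Set.Icc (0:ℝ) 1, max 0 (min 1 ((t + (c + s) / 2 - s * y) / c)) :=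
    integral_nonneg fun y => le_max_left _ _
  rw [h2, ENNReal.toReal_ofReal h3,
    intervalIntegral.integral_of_le (by norm_num : (0:ℝ) ≤ 1), ← integral_Icc_eq_integral_Ioc]

lemma Cint_mono_strict (c s a : ℝ) (hc : 0 < c) (hs : 0 ≤ s)
    (ha : 1 / 2 < a) (ha1 : a < 1) {t1 t2 : ℝ} (hlt : t1 < t2)
    (h1 : ∫ y in (0:ℝ)..1, max 0 (min 1 ((t1 + (c + s) / 2 - s * y) / c)) = a)
    (h2 : ∫ y in (0:ℝ)..1, max 0 (min 1 ((t2 + (c + s) / 2 - s * y) / c)) = a) :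
    False := by
  set M := (c + s) / 2 with hM
  -- bounds: any t with integral = a lies in (-M, M)
  have hbound : ∀ t : ℝ, (∫ y in (0:ℝ)..1, max 0 (min 1 ((t + M - s * y) / c)) = a) →
      -M < t ∧ t < M := by
    intro t ht
    constructor
    · by_contra h
      push_neg at h
      have hz : ∀ y ∈ Set.uIcc (0:ℝ) 1, max 0 (min 1 ((t + M - s * y) / c)) = 0 := by
        intro y hy
        rw [Set.uIcc_of_le (by norm_num : (0:ℝ) ≤ 1), Set.mem_Icc] at hy
        have : (t + M - s * y) / c ≤ 0 := by
          apply div_nonpos_of_nonpos_of_nonneg _ hc.le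
          nlinarith [hy.1, hy.2]
        rw [max_eq_left (le_trans (min_le_right _ _) this)]
      rw [intervalIntegral.integral_congr hz] at ht
      simp at ht
      linarith
    · by_contra h
      push_neg at h
      have hz : ∀ y ∈ Set.uIcc (0:ℝ) 1, max 0 (min 1 ((t + M - s * y) / c)) = 1 := by
        intro y hy
        rw [Set.uIcc_of_le (by norm_num : (0:ℝ) ≤ 1), Set.mem_Icc] at hy
        have : (1:ℝ) ≤ (t + M - s * y) / c := by
          rw [le_div_iff₀ hc]
          nlinarith [hy.1, hy.2]
        rw [min_eq_left this, max_eq_right zero_le_one]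
      rw [intervalIntegral.integral_congr hz] at ht
      simp at ht
      linarith
  obtain ⟨hb1, hb1'⟩ := hbound t1 h1
  obtain ⟨hb2, hb2'⟩ := hbound t2 h2
  -- find y₀ ∈ [0,1] with strict inequality of integrands
  have hy₀ : ∃ y₀ ∈ Set.Icc (0:ℝ) 1, (t1 + M - s * y₀) / c < 1 ∧ 0 < (t2 + M - s * y₀) / c := by
    rcases eq_or_lt_of_le hs with hs0 | hs0
    · refine ⟨0, by norm_num, ?_, ?_⟩
      · rw [div_lt_one hc]; rw [hM]; nlinarith [hb1']
      · apply div_pos _ hc; rw [hM]; nlinarith [hb2]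
    · set lo := max 0 (t1 + M - c) with hlo
      set hi := min s (t2 + M) with hhi
      have hlohi : lo < hi := by
        rw [hlo, hhi]
        apply max_lt <;> apply lt_min
        · exact hs0
        · linarith
        · rw [hM]; nlinarith
        · linarith [hc]
      set z := (lo + hi) / 2 with hz
      have hz1 : lo < z := by rw [hz]; linarith
      have hz2 : z < hi := by rw [hz]; linarith
      refine ⟨z / s, ⟨?_, ?_⟩, ?_, ?_⟩
      · apply div_nonneg _ hs0.le
        have : (0:ℝ) ≤ lo := le_max_left _ _
        linarith
      · rw [div_le_one hs0]
        have : hi ≤ s := min_le_left _ _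
        linarith
      · rw [div_lt_one hc]
        have hzz : s * (z / s) = z := by field_simp
        rw [hzz]
        have : t1 + M - c ≤ lo := le_max_right _ _
        linarith
      · apply div_pos _ hc
        have hzz : s * (z / s) = z := by field_simp
        rw [hzz]
        have : hi ≤ t2 + M := min_le_right _ _
        linarith
  obtain ⟨y₀, hy₀mem, hg1, hg2⟩ := hy₀
  have hcont : ∀ t : ℝ, ContinuousOn (fun y : ℝ => max 0 (min 1 ((t + M - s * y) / c)))
      (Set.Icc 0 1) :=
    fun t => (continuous_const.max (continuous_const.min (by fun_prop))).continuousOn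
  have hkey : (∫ y in (0:ℝ)..1, max 0 (min 1 ((t1 + M - s * y) / c)))
      < ∫ y in (0:ℝ)..1, max 0 (min 1 ((t2 + M - s * y) / c)) := by
    apply intervalIntegral.integral_lt_integral_of_continuousOn_of_le_of_exists_lt
      (by norm_num) (hcont t1) (hcont t2)
    · intro y _
      have hdd : (t1 + M - s * y) / c ≤ (t2 + M - s * y) / c :=
        (div_le_div_iff_of_pos_right hc).2 (by linarith)
      exact max_le_max le_rfl (min_le_min le_rfl hdd)
    · refine ⟨y₀, hy₀mem, ?_⟩
      have hdd : (t1 + M - s * y₀) / c < (t2 + M - s * y₀) / c :=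
        (div_lt_div_iff_of_pos_right hc).2 (by linarith)
      rcases le_or_gt ((t1 + M - s * y₀) / c) 0 with hle | hpos
      · rw [max_eq_left (le_trans (min_le_right _ _) hle)]
        exact lt_of_lt_of_le (lt_min zero_lt_one hg2) (le_max_right _ _)
      · rw [max_eq_right (le_min zero_le_one hpos.le)]
        rw [min_eq_right hg1.le]
        exact lt_of_lt_of_le (lt_min hg1 hdd) (le_max_right _ _)
  rw [h1, h2] at hkey
  exact lt_irrefl a hkey

lemma trap_int (c s a : ℝ) (hc : 0 < c) (hs : 0 ≤ s) (ha : 1 / 2 < a) (ha1 : a < 1)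
    (hsc : s ≤ 2 * (1 - a) * c) :
    ∫ y in (0:ℝ)..1, max 0 (min 1 (((a - 1/2) * c + (c + s) / 2 - s * y) / c)) = a := by
  have heq : ∀ y ∈ Set.uIcc (0:ℝ) 1,
      max 0 (min 1 (((a - 1/2) * c + (c + s) / 2 - s * y) / c))
      = (a + s / (2*c)) + (-(s/c)) * y := by
    intro y hy
    rw [Set.uIcc_of_le (by norm_num : (0:ℝ) ≤ 1), Set.mem_Icc] at hy
    have hG : ((a - 1/2) * c + (c + s) / 2 - s * y) / c = (a + s / (2*c)) + (-(s/c)) * y := by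
      field_simp
      ring
    rw [hG]
    have hle1 : (a + s / (2*c)) + (-(s/c)) * y ≤ 1 := by
      have h1 : s / (2*c) ≤ 1 - a := by
        rw [div_le_iff₀ (by linarith)]
        nlinarith
      have h2 : 0 ≤ (s/c) * y := mul_nonneg (div_nonneg hs hc.le) hy.1
      nlinarith
    have hge0 : 0 ≤ (a + s / (2*c)) + (-(s/c)) * y := by
      have h1 : s / (2*c) ≤ 1 - a := by
        rw [div_le_iff₀ (by linarith)]
        nlinarith
      have h2 : (s/c) * y ≤ s/c := by
        nlinarith [div_nonneg hs hc.le, hy.2]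
      have h3 : s / c = 2 * (s / (2*c)) := by field_simp
      nlinarith
    rw [min_eq_right hle1, max_eq_right hge0]
  rw [intervalIntegral.integral_congr heq]
  have h2' : IntervalIntegrable (fun x : ℝ => -(s/c) * x) volume 0 1 := by
    apply Continuous.intervalIntegrable; fun_prop
  rw [intervalIntegral.integral_add intervalIntegrable_const h2']
  rw [intervalIntegral.integral_const, intervalIntegral.integral_const_mul, integral_id]
  have hcc : c ≠ 0 := hc.ne'
  field_simp
  have hci : c * c⁻¹ = 1 := mul_inv_cancel₀ hcc
  linear_combination (s + 2 * a * c) * hci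

lemma tri_int (c s a : ℝ) (hc : 0 < c) (hs : 0 < s) (hsc : s ≤ c)
    (ha : 1 / 2 < a) (ha1 : a < 1) (hk : 2 * (1 - a) * c < s) :
    ∫ y in (0:ℝ)..1, max 0 (min 1
      (((c + s) / 2 - Real.sqrt (2 * (1 - a) * c * s) + (c + s) / 2 - s * y) / c)) = a := by
  set R := Real.sqrt (2 * (1 - a) * c * s) with hRdef
  have hR2 : R ^ 2 = 2 * (1 - a) * c * s := Real.sq_sqrt (by nlinarith [mul_pos (mul_pos (by linarith : (0:ℝ) < 2 * (1 - a)) hc) hs])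
  have hRpos : 0 < R := Real.sqrt_pos.2 (by nlinarith [mul_pos (mul_pos (by linarith : (0:ℝ) < 2 * (1 - a)) hc) hs])
  have hRs : R < s := by nlinarith [hR2]
  have hRc : R ≤ c := hRs.le.trans hsc
  set y1 : ℝ := 1 - R / s with hy1def
  have hRs' : R / s < 1 := (div_lt_one hs).2 hRs
  have hRspos : 0 < R / s := div_pos hRpos hs
  have hy10 : 0 < y1 := by rw [hy1def]; linarith
  have hy11 : y1 < 1 := by rw [hy1def]; linarith
  have hintc : ∀ u v : ℝ, IntervalIntegrable
      (fun y : ℝ => max 0 (min 1 (((c + s) / 2 - R + (c + s) / 2 - s * y) / c))) volume u v := by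
    intro u v
    apply Continuous.intervalIntegrable
    exact continuous_const.max (continuous_const.min (by fun_prop))
  rw [← intervalIntegral.integral_add_adjacent_intervals (hintc 0 y1) (hintc y1 1)]
  have heq1 : ∀ y ∈ Set.uIcc (0:ℝ) y1,
      max 0 (min 1 (((c + s) / 2 - R + (c + s) / 2 - s * y) / c)) = 1 := by
    intro y hy
    rw [Set.uIcc_of_le hy10.le, Set.mem_Icc] at hy
    have h1 : (1:ℝ) ≤ ((c + s) / 2 - R + (c + s) / 2 - s * y) / c := by
      rw [le_div_iff₀ hc]
      have : s * y ≤ s * y1 := by nlinarith [hy.2]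
      rw [hy1def] at this
      have h2 : s * (1 - R / s) = s - R := by field_simp
      nlinarith
    rw [min_eq_left h1, max_eq_right zero_le_one]
  have heq2 : ∀ y ∈ Set.uIcc y1 1,
      max 0 (min 1 (((c + s) / 2 - R + (c + s) / 2 - s * y) / c))
      = (c + s - R) / c + (-(s / c)) * y := by
    intro y hy
    rw [Set.uIcc_of_le hy11.le, Set.mem_Icc] at hy
    have hG : ((c + s) / 2 - R + (c + s) / 2 - s * y) / c = (c + s - R) / c + (-(s / c)) * y := by
      field_simp
      ring
    rw [hG]
    have hle1 : (c + s - R) / c + (-(s / c)) * y ≤ 1 := by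
      rw [← hG, div_le_one hc]
      have : s * y1 ≤ s * y := by nlinarith [hy.1]
      rw [hy1def] at this
      have h2 : s * (1 - R / s) = s - R := by field_simp
      nlinarith
    have hge0 : 0 ≤ (c + s - R) / c + (-(s / c)) * y := by
      rw [← hG]
      apply div_nonneg _ hc.le
      nlinarith [hy.2]
    rw [min_eq_right hle1, max_eq_right hge0]
  rw [intervalIntegral.integral_congr heq1, intervalIntegral.integral_congr heq2]
  have h2' : IntervalIntegrable (fun x : ℝ => -(s / c) * x) volume y1 1 := by
    apply Continuous.intervalIntegrable; fun_prop
  rw [intervalIntegral.integral_add intervalIntegrable_const h2',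
    intervalIntegral.integral_const, intervalIntegral.integral_const, smul_eq_mul, smul_eq_mul,
    intervalIntegral.integral_const_mul, integral_id]
  rw [hy1def]
  have hss : s ≠ 0 := hs.ne'
  have hcc : c ≠ 0 := hc.ne'
  field_simp
  linear_combination (-1) * hR2

noncomputable def g2fun (a : ℝ) : ℝ → ℝ := fun x =>
  (Real.cos x + -Real.sin x) / 2 -
    (2 * (1 - a) * -Real.sin x * Real.sin x + 2 * (1 - a) * Real.cos x * Real.cos x) /
      (2 * Real.sqrt (2 * (1 - a) * Real.cos x * Real.sin x))

lemma hf2d (a : ℝ) (x : ℝ) (hpos : 0 < 2 * (1 - a) * Real.cos x * Real.sin x) :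
    HasDerivAt (fun φ => (Real.sin φ + Real.cos φ) / 2 -
      Real.sqrt (2 * (1 - a) * Real.cos φ * Real.sin φ)) (g2fun a x) x := by
  have hin : HasDerivAt (fun y => 2 * (1 - a) * Real.cos y * Real.sin y)
      (2 * (1 - a) * -Real.sin x * Real.sin x + 2 * (1 - a) * Real.cos x * Real.cos x) x :=
    ((Real.hasDerivAt_cos x).const_mul (2 * (1 - a))).mul (Real.hasDerivAt_sin x)
  have hsq := hin.sqrt (ne_of_gt hpos)
  have hlin : HasDerivAt (fun y => (Real.sin y + Real.cos y) / 2)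
      ((Real.cos x + -Real.sin x) / 2) x :=
    ((Real.hasDerivAt_sin x).add (Real.hasDerivAt_cos x)).div_const 2
  exact hlin.sub hsq

lemma hf1d (a : ℝ) (x : ℝ) :
    HasDerivAt (fun φ => (a - 1/2) * Real.cos φ) ((a - 1/2) * -Real.sin x) x :=
  (Real.hasDerivAt_cos x).const_mul (a - 1/2)

lemma contdiff_piece (a : ℝ) (ha : 1 / 2 < a) (ha1 : a < 1) :
    ContDiffAt ℝ 1 (fun φ => if φ ≤ Real.arctan (2 * (1 - a)) then (a - 1/2) * Real.cos φ
      else (Real.sin φ + Real.cos φ) / 2 - Real.sqrt (2 * (1 - a) * Real.cos φ * Real.sin φ))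
      (Real.arctan (2 * (1 - a))) := by
  set k : ℝ := 2 * (1 - a) with hkdef
  set φ' : ℝ := Real.arctan k with hφ'def
  have hk0 : 0 < k := by rw [hkdef]; linarith
  have hk1 : k < 1 := by rw [hkdef]; linarith
  have hφ'0 : 0 < φ' := by
    rw [hφ'def, ← Real.arctan_zero]
    exact Real.arctan_strictMono hk0
  have hφ'4 : φ' < π / 4 := by
    rw [hφ'def, ← Real.arctan_one]
    exact Real.arctan_strictMono hk1
  have hc' : 0 < Real.cos φ' := Real.cos_arctan_pos k
  have hs' : 0 < Real.sin φ' := Real.sin_pos_of_pos_of_lt_pi hφ'0 (by nlinarith [Real.pi_pos])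
  have hks : k * Real.cos φ' = Real.sin φ' := by
    rw [hφ'def, Real.cos_arctan, Real.sin_arctan]
    ring
  have hpos' : ∀ x ∈ Set.Ioo (0:ℝ) (π/4), 0 < 2 * (1 - a) * Real.cos x * Real.sin x := by
    intro x hx
    have hcx : 0 < Real.cos x := Real.cos_pos_of_mem_Ioo
      ⟨by nlinarith [Real.pi_pos, hx.1], by nlinarith [Real.pi_pos, hx.2]⟩
    have hsx : 0 < Real.sin x := Real.sin_pos_of_pos_of_lt_pi hx.1 (by nlinarith [Real.pi_pos, hx.2])
    nlinarith [mul_pos (mul_pos hk0 hcx) hsx]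
  have hks2 : 2 * (1 - a) * Real.cos φ' = Real.sin φ' := by
    have h := hks; rw [hkdef] at h; exact h
  have hsv : Real.sqrt (2 * (1 - a) * Real.cos φ' * Real.sin φ') = Real.sin φ' := by
    rw [show 2 * (1 - a) * Real.cos φ' * Real.sin φ' = Real.sin φ' * Real.sin φ' by
      linear_combination (Real.sin φ') * hks2]
    exact Real.sqrt_mul_self hs'.le
  have hval : (a - 1/2) * Real.cos φ'
      = (Real.sin φ' + Real.cos φ') / 2 - Real.sqrt (2 * (1 - a) * Real.cos φ' * Real.sin φ') := by
    rw [hsv]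
    have hks' : 2 * (1 - a) * Real.cos φ' = Real.sin φ' := by rw [← hkdef]; exact hks
    linarith [hks']
  have hder : (a - 1/2) * -Real.sin φ' = g2fun a φ' := by
    rw [g2fun, hsv]
    have hks' : 2 * (1 - a) * Real.cos φ' = Real.sin φ' := by rw [← hkdef]; exact hks
    have h2 : 2 * (1 - a) * -Real.sin φ' * Real.sin φ' + 2 * (1 - a) * Real.cos φ' * Real.cos φ'
        = Real.sin φ' * Real.cos φ' - 2 * (1 - a) * Real.sin φ' * Real.sin φ' := by
      linear_combination (Real.cos φ') * hks'
    rw [h2]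
    field_simp
    ring
  set F : ℝ → ℝ := fun φ => if φ ≤ φ' then (a - 1/2) * Real.cos φ
      else (Real.sin φ + Real.cos φ) / 2 - Real.sqrt (2 * (1 - a) * Real.cos φ * Real.sin φ)
    with hFdef
  set g : ℝ → ℝ := fun x => if x ≤ φ' then (a - 1/2) * -Real.sin x else g2fun a x with hgdef
  rw [contDiffAt_one_iff]
  refine ⟨fun x => (1 : ℝ →L[ℝ] ℝ).smulRight (g x), Set.Ioo 0 (π/4),
    isOpen_Ioo.mem_nhds ⟨hφ'0, hφ'4⟩, ?_, ?_⟩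
  · -- continuity of the derivative
    have hgcont : ContinuousOn g (Set.Ioo 0 (π/4)) := by
      intro x hx
      have hg2contAt : ∀ y ∈ Set.Ioo (0:ℝ) (π/4), ContinuousAt (g2fun a) y := by
        intro y hy
        have h1 : ContinuousAt (fun x => 2 * Real.sqrt (2 * (1 - a) * Real.cos x * Real.sin x)) y := by
          apply ContinuousAt.mul continuousAt_const
          exact Real.continuous_sqrt.continuousAt.comp (by fun_prop)
        have h2 : (2 : ℝ) * Real.sqrt (2 * (1 - a) * Real.cos y * Real.sin y) ≠ 0 := by
          have := Real.sqrt_pos.2 (hpos' y hy)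
          positivity
        apply ContinuousAt.sub (by fun_prop)
        exact ContinuousAt.div (by fun_prop) h1 h2
      rcases lt_trichotomy x φ' with h | h | h
      · apply ContinuousAt.continuousWithinAt
        have hc1 : ContinuousAt (fun x : ℝ => (a - 1/2) * -Real.sin x) x := by fun_prop
        apply hc1.congr
        exact Filter.eventuallyEq_of_mem (Iio_mem_nhds h) fun y hy =>
          (if_pos (le_of_lt hy)).symm
      · subst h
        have hL : ContinuousWithinAt g (Set.Iic φ') φ' :=
          ((by fun_prop : Continuous fun x => (a - 1/2) * -Real.sin x)).continuousAt
            |>.continuousWithinAt.congr (fun y hy => if_pos hy) (if_pos le_rfl)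
        have hR : ContinuousWithinAt g (Set.Ici φ') φ' := by
          apply ((hg2contAt φ' hx).continuousWithinAt).congr
          · intro y hy
            rcases eq_or_lt_of_le (Set.mem_Ici.1 hy) with h' | h'
            · rw [← h', hgdef]
              simp only [if_pos le_rfl]
              exact hder
            · exact if_neg (not_le.2 h')
          · rw [hgdef]
            simp only [if_pos le_rfl]
            exact hder
        have := hL.union hR
        rw [Set.Iic_union_Ici] at this
        rw [continuousWithinAt_univ] at this
        exact this.continuousWithinAt
      · apply ContinuousAt.continuousWithinAt
        apply ContinuousAt.congr (hg2contAt x hx)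
        exact Filter.eventuallyEq_of_mem (Ioi_mem_nhds h) fun y hy =>
          (if_neg (not_le.2 hy)).symm
    exact ((ContinuousLinearMap.smulRightL ℝ ℝ ℝ) (1 : ℝ →L[ℝ] ℝ)).continuous.comp_continuousOn
      hgcont
  · -- derivative everywhere on Ioo
    intro x hx
    show HasFDerivAt F ((1 : ℝ →L[ℝ] ℝ).smulRight (g x)) x
    rw [ContinuousLinearMap.smulRight_one_eq_toSpanSingleton, ← hasDerivAt_iff_hasFDerivAt]
    rcases lt_trichotomy x φ' with h | h | h
    · rw [hgdef]
      simp only [if_pos h.le]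
      apply HasDerivAt.congr_of_eventuallyEq (hf1d a x)
      exact Filter.eventuallyEq_of_mem (Iio_mem_nhds h) fun y hy => if_pos (le_of_lt hy)
    · subst h
      have hL : HasDerivWithinAt F ((a - 1/2) * -Real.sin φ') (Set.Iic φ') φ' :=
        (hf1d a φ').hasDerivWithinAt.congr (fun y hy => if_pos hy) (if_pos le_rfl)
      have hR : HasDerivWithinAt F ((a - 1/2) * -Real.sin φ') (Set.Ici φ') φ' := by
        have h2 := (hf2d a φ' (hpos' φ' hx)).hasDerivWithinAt (s := Set.Ici φ')
        rw [← hder] at h2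
        apply h2.congr
        · intro y hy
          rcases eq_or_lt_of_le (Set.mem_Ici.1 hy) with h' | h'
          · rw [← h', hFdef]
            simp only [if_pos le_rfl]
            exact hval
          · exact if_neg (not_le.2 h')
        · rw [hFdef]
          simp only [if_pos le_rfl]
          exact hval
      have := hL.union hR
      rw [Set.Iic_union_Ici, hasDerivWithinAt_univ] at this
      rw [hgdef]
      simp only [if_pos le_rfl]
      exact this
    · rw [hgdef]
      simp only [if_neg (not_le.2 h)]
      apply HasDerivAt.congr_of_eventuallyEq (hf2d a x (hpos' x hx))
      exact Filter.eventuallyEq_of_mem (Ioi_mem_nhds h) fun y hy => if_neg (not_le.2 hy)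

theorem stmt5 (a : ℝ) (ha : 1 / 2 < a) (ha1 : a < 1) (sStar : ℝ → ℝ)
    (hcon : ∀ φ ∈ Set.Icc (0 : ℝ) (π / 4),
      (volume {x : ℝ × ℝ | x ∈ Set.Icc ((0 : ℝ), (0 : ℝ)) (1, 1) ∧
        (x.1 - 1 / 2) * Real.cos φ + (x.2 - 1 / 2) * Real.sin φ ≤ sStar φ}).toReal = a) :
    let φ' := Real.arctan (2 * (1 - a))
    (∀ φ ∈ Set.Icc (0 : ℝ) φ', sStar φ = (a - 1 / 2) * Real.cos φ) ∧
      (∀ φ ∈ Set.Ioc φ' (π / 4),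
        sStar φ = (Real.sin φ + Real.cos φ) / 2 -
          Real.sqrt (2 * (1 - a) * Real.cos φ * Real.sin φ)) ∧
      ContDiffAt ℝ 1 sStar φ' := by
  intro φ'
  have hk0 : (0:ℝ) < 2 * (1 - a) := by linarith
  have hk1 : 2 * (1 - a) < 1 := by linarith
  have hφ'0 : 0 < φ' := by
    rw [show φ' = Real.arctan (2 * (1 - a)) from rfl, ← Real.arctan_zero]
    exact Real.arctan_strictMono hk0
  have hφ'4 : φ' < π / 4 := by
    rw [show φ' = Real.arctan (2 * (1 - a)) from rfl, ← Real.arctan_one]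
    exact Real.arctan_strictMono hk1
  have hpi : (0:ℝ) < π := Real.pi_pos
  -- basic trig facts for φ ∈ [0, π/4]
  have hcos : ∀ φ : ℝ, 0 ≤ φ → φ ≤ π/4 → 0 < Real.cos φ := fun φ h0 h4 =>
    Real.cos_pos_of_mem_Ioo ⟨by linarith, by linarith⟩
  have hsin : ∀ φ : ℝ, 0 ≤ φ → φ ≤ π/4 → 0 ≤ Real.sin φ := fun φ h0 h4 =>
    Real.sin_nonneg_of_nonneg_of_le_pi h0 (by linarith)
  have hmem : ∀ φ : ℝ, 0 ≤ φ → φ ≤ π/4 → φ ∈ Set.Ioo (-(π/2)) (π/2) := fun φ h0 h4 =>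
    ⟨by linarith, by linarith⟩
  have hφ'mem : φ' ∈ Set.Ioo (-(π/2)) (π/2) := hmem φ' hφ'0.le hφ'4.le
  have htanφ' : Real.tan φ' = 2 * (1 - a) := Real.tan_arctan _
  -- part 1
  have part1 : ∀ φ ∈ Set.Icc (0 : ℝ) φ', sStar φ = (a - 1 / 2) * Real.cos φ := by
    intro φ hφ
    obtain ⟨h0, h4'⟩ := hφ
    have h4 : φ ≤ π/4 := h4'.trans hφ'4.le
    have hc := hcos φ h0 h4
    have hs := hsin φ h0 h4
    have htan : Real.tan φ ≤ 2 * (1 - a) := by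
      rw [← htanφ']
      exact Real.strictMonoOn_tan.monotoneOn (hmem φ h0 h4) hφ'mem h4'
    have hsc : Real.sin φ ≤ 2 * (1 - a) * Real.cos φ := by
      rw [Real.tan_eq_sin_div_cos, div_le_iff₀ hc] at htan
      linarith
    have e1 := hcon φ ⟨h0, h4⟩
    rw [vol_eq (Real.cos φ) (Real.sin φ) (sStar φ) hc] at e1
    have e2 := trap_int (Real.cos φ) (Real.sin φ) a hc hs ha ha1 hsc
    rcases lt_trichotomy (sStar φ) ((a - 1/2) * Real.cos φ) with h | h | h
    · exact absurd (Cint_mono_strict (Real.cos φ) (Real.sin φ) a hc hs ha ha1 h e1 e2) not_false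
    · exact h
    · exact absurd (Cint_mono_strict (Real.cos φ) (Real.sin φ) a hc hs ha ha1 h e2 e1) not_false
  -- part 2
  have part2 : ∀ φ ∈ Set.Ioc φ' (π / 4), sStar φ = (Real.sin φ + Real.cos φ) / 2 -
      Real.sqrt (2 * (1 - a) * Real.cos φ * Real.sin φ) := by
    intro φ hφ
    obtain ⟨h0', h4⟩ := hφ
    have h0 : 0 ≤ φ := (hφ'0.trans h0').le
    have hc := hcos φ h0 h4
    have hspos : 0 < Real.sin φ := Real.sin_pos_of_pos_of_lt_pi (hφ'0.trans h0') (by linarith)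
    have hsc : Real.sin φ ≤ Real.cos φ := by
      have h1 : Real.sin φ ≤ Real.sin (π/4) :=
        Real.strictMonoOn_sin.monotoneOn ⟨by linarith, by linarith⟩
          ⟨by linarith, by linarith⟩ h4
      have h2 : Real.cos (π/4) ≤ Real.cos φ :=
        Real.strictAntiOn_cos.antitoneOn ⟨h0, by linarith⟩ ⟨by linarith, by linarith⟩ h4
      rw [Real.sin_pi_div_four] at h1
      rw [Real.cos_pi_div_four] at h2
      linarith
    have htan : 2 * (1 - a) < Real.tan φ := by
      rw [← htanφ']
      exact Real.strictMonoOn_tan hφ'mem (hmem φ h0 h4) h0'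
    have hkc : 2 * (1 - a) * Real.cos φ < Real.sin φ := by
      rw [Real.tan_eq_sin_div_cos, lt_div_iff₀ hc] at htan
      linarith
    have e1 := hcon φ ⟨h0, h4⟩
    rw [vol_eq (Real.cos φ) (Real.sin φ) (sStar φ) hc] at e1
    have e2 := tri_int (Real.cos φ) (Real.sin φ) a hc hspos hsc ha ha1 hkc
    have hgoal : sStar φ = (Real.cos φ + Real.sin φ) / 2 -
        Real.sqrt (2 * (1 - a) * Real.cos φ * Real.sin φ) := by
      rcases lt_trichotomy (sStar φ) ((Real.cos φ + Real.sin φ) / 2 -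
          Real.sqrt (2 * (1 - a) * Real.cos φ * Real.sin φ)) with h | h | h
      · exact absurd (Cint_mono_strict (Real.cos φ) (Real.sin φ) a hc hspos.le ha ha1 h e1
          e2) not_false
      · exact h
      · exact absurd (Cint_mono_strict (Real.cos φ) (Real.sin φ) a hc hspos.le ha ha1 h
          e2 e1) not_false
    rw [hgoal]
    ring
  refine ⟨part1, part2, ?_⟩
  -- part 3
  apply (contdiff_piece a ha ha1).congr_of_eventuallyEq
  apply Filter.eventuallyEq_of_mem (isOpen_Ioo.mem_nhds (⟨hφ'0, hφ'4⟩ : φ' ∈ Set.Ioo 0 (π/4)))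
  intro φ hφ
  show sStar φ = if φ ≤ Real.arctan (2 * (1 - a)) then (a - 1/2) * Real.cos φ
    else (Real.sin φ + Real.cos φ) / 2 - Real.sqrt (2 * (1 - a) * Real.cos φ * Real.sin φ)
  by_cases h : φ ≤ Real.arctan (2 * (1 - a))
  · rw [if_pos h]
    exact part1 φ ⟨hφ.1.le, h⟩
  · rw [if_neg h]
    exact part2 φ ⟨not_le.1 h, hφ.2.le⟩
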